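/- Let m ≥ 3 and let A = (a₁,…,a_m) and A' = (a'₁,…,a'_m) be two distinct normalized nonincreasing scoring vectors over the naturals (i.e., a_m = a'_m = 0 and the gcd of the nonzero entries of each vector, if any, is 1). Then there exists a finite multiset of votes over m candidates such that the winner set under A differs from the winner set under A'. -/

import Mathlib

/-- Score of candidate c under natural-number scoring vector α for the multiset of votes V. -/
def score {m : ℕ} (α : Fin m → ℕ) (V : Multiset (Equiv.Perm (Fin m))) (c : Fin m) : ℕ :=
  (V.map fun v => α (v.symm c)).sum

/-- Winners: candidates with maximal total score. -/
def winners {m : ℕ} (α : Fin m → ℕ) (V : Multiset (Equiv.Perm (Fin m))) : Set (Fin m) :=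
  {c | ∀ d, score α V d ≤ score α V c}

section Aux

variable {m : ℕ}

lemma score_add (α : Fin m → ℕ) (V W : Multiset (Equiv.Perm (Fin m))) (c : Fin m) :
    score α (V + W) c = score α V c + score α W c := by
  simp [score]

lemma score_nsmul (α : Fin m → ℕ) (k : ℕ) (V : Multiset (Equiv.Perm (Fin m))) (c : Fin m) :
    score α (k • V) c = k * score α V c := by
  induction k with
  | zero => simp [score]
  | succ k ih => rw [succ_nsmul, score_add, ih, Nat.succ_mul]

lemma score_sum {β : Type*} [DecidableEq β] (α : Fin m → ℕ) (s : Finset β)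
    (f : β → Multiset (Equiv.Perm (Fin m))) (c : Fin m) :
    score α (∑ d ∈ s, f d) c = ∑ d ∈ s, score α (f d) c := by
  induction s using Finset.induction with
  | empty => simp [score]
  | insert _ _ h ih => rw [Finset.sum_insert h, Finset.sum_insert h, score_add, ih]

variable {n : ℕ} [NeZero n]

/-- The base vote: candidate 0 at position 0, other candidates cyclically shifted by `t`. -/
def baseVote (t : Fin n) : Equiv.Perm (Fin (n + 1)) :=
  (finSuccEquiv n).trans ((Equiv.optionCongr (Equiv.addLeft t)).trans (finSuccEquiv n).symm)

lemma baseVote_symm_zero (t : Fin n) : (baseVote t).symm 0 = 0 := by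
  simp [baseVote]; rfl

lemma baseVote_symm_succ (t : Fin n) (i : Fin n) :
    (baseVote t).symm i.succ = (-t + i).succ := by
  simp [baseVote, Equiv.addLeft]; rfl

/-- Block of n votes: candidate `c` always at position `j`, with the other candidates
occupying each other position exactly once. -/
def block (c j : Fin (n + 1)) : Multiset (Equiv.Perm (Fin (n + 1))) :=
  Finset.univ.val.map fun t : Fin n => Equiv.swap 0 c * baseVote t * Equiv.swap 0 j

lemma score_block (α : Fin (n + 1) → ℕ) (c j e : Fin (n + 1)) :
    score α (block c j) e = if e = c then n * α j else (∑ i, α i) - α j := by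
  have hsymm : ∀ (t : Fin n),
      (Equiv.swap 0 c * baseVote t * Equiv.swap 0 j).symm e
        = Equiv.swap 0 j ((baseVote t).symm (Equiv.swap 0 c e)) := by
    intro t
    simp [Equiv.Perm.mul_def, Equiv.symm_trans_apply]
  have hscore : score α (block c j) e
      = ∑ t : Fin n, α (Equiv.swap 0 j ((baseVote t).symm (Equiv.swap 0 c e))) := by
    rw [score, block, Multiset.map_map]
    simp only [Function.comp, hsymm]
    rfl
  rw [hscore]
  by_cases he : e = c
  · subst he
    rw [if_pos rfl]
    simp [Equiv.swap_apply_right, baseVote_symm_zero, Equiv.swap_apply_left, Finset.card_univ,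
      mul_comm]
  · have h0 : Equiv.swap 0 c e ≠ 0 := by
      intro h
      apply he
      have h2 := congrArg (Equiv.swap 0 c) h
      rwa [Equiv.swap_apply_self, Equiv.swap_apply_left] at h2
    obtain ⟨i, hi⟩ := Fin.eq_succ_of_ne_zero h0
    rw [if_neg he]
    have h1 : ∀ t : Fin n, α (Equiv.swap 0 j ((baseVote t).symm (Equiv.swap 0 c e)))
        = α (Equiv.swap 0 j ((i - t).succ)) := by
      intro t; rw [hi, baseVote_symm_succ, neg_add_eq_sub]
    rw [Finset.sum_congr rfl fun t _ => h1 t]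
    have h2 : ∑ t : Fin n, α (Equiv.swap 0 j ((i - t).succ))
        = ∑ s : Fin n, α (Equiv.swap 0 j s.succ) :=
      Fintype.sum_equiv (Equiv.subLeft i) _ _ (fun t => rfl)
    have h3 : ∑ x : Fin (n+1), α (Equiv.swap 0 j x)
        = α (Equiv.swap 0 j 0) + ∑ s : Fin n, α (Equiv.swap 0 j s.succ) :=
      Fin.sum_univ_succ _
    have h4 : ∑ x : Fin (n+1), α (Equiv.swap 0 j x) = ∑ x, α x :=
      Equiv.sum_comp _ _
    rw [Equiv.swap_apply_left] at h3
    omega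

lemma sum_ite_erase (hn : 1 ≤ n) (C : ℕ) (e : Fin (n + 1)) :
    (∑ d ∈ Finset.univ.erase (0 : Fin (n+1)), if e = d then 0 else C)
      = if e = 0 then n * C else (n - 1) * C := by
  by_cases he : e = 0
  · subst he
    rw [if_pos rfl,
      Finset.sum_congr rfl (fun d hd => if_neg (fun h => (Finset.mem_erase.mp hd).1 h.symm)),
      Finset.sum_const, smul_eq_mul, Finset.card_erase_of_mem (Finset.mem_univ _),
      Finset.card_univ, Fintype.card_fin, Nat.add_sub_cancel]
  · have heE : e ∈ Finset.univ.erase (0 : Fin (n+1)) :=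
      Finset.mem_erase.mpr ⟨he, Finset.mem_univ _⟩
    rw [if_neg he, ← Finset.add_sum_erase _ _ heE, if_pos rfl, zero_add,
      Finset.sum_congr rfl (fun d hd => if_neg (fun h => (Finset.mem_erase.mp hd).1 h.symm)),
      Finset.sum_const, smul_eq_mul, Finset.card_erase_of_mem heE,
      Finset.card_erase_of_mem (Finset.mem_univ _), Finset.card_univ, Fintype.card_fin,
      Nat.add_sub_cancel]

end Aux

/-- Two distinct normalized nonincreasing natural scoring vectors (last entry 0, gcd of the
nonzero entries 1, or all-zero) differ in winner set on some finite multiset of votes. -/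
theorem stmt_2 (m : ℕ) (hm : 3 ≤ m) (A A' : Fin m → ℕ)
    (hA : Antitone A) (hA' : Antitone A')
    (hA0 : A ⟨m - 1, by omega⟩ = 0) (hA'0 : A' ⟨m - 1, by omega⟩ = 0)
    (hAgcd : Finset.univ.gcd A = 1 ∨ ∀ i, A i = 0)
    (hA'gcd : Finset.univ.gcd A' = 1 ∨ ∀ i, A' i = 0)
    (hne : A ≠ A') :
    ∃ V : Multiset (Equiv.Perm (Fin m)), winners A V ≠ winners A' V := by
  classical
  obtain ⟨n, rfl⟩ : ∃ n, m = n + 1 := ⟨m - 1, by omega⟩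
  have hn2 : 2 ≤ n := by omega
  haveI : NeZero n := ⟨by omega⟩
  have hk0 : (Fin.last n) ≠ 0 := by
    simp only [ne_eq, Fin.ext_iff, Fin.val_last, Fin.val_zero]
    omega
  have hAk : A (Fin.last n) = 0 := hA0
  have hA'k : A' (Fin.last n) = 0 := hA'0
  -- degenerate case: B nontrivial, B' all-zero
  have degen : ∀ (B B' : Fin (n+1) → ℕ), Antitone B → B (Fin.last n) = 0 →
      Finset.univ.gcd B = 1 → (∀ i, B' i = 0) →
      winners B {1} ≠ winners B' {1} := by
    intro B B' hB hBk hBg hB'z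
    have hs : ∀ (β : Fin (n+1) → ℕ) (c : Fin (n+1)), score β {1} c = β c := by
      intro β c; simp [score]; rfl
    have hBpos : 0 < B 0 := by
      rcases Nat.eq_zero_or_pos (B 0) with h | h
      · exfalso
        have hall : ∀ i ∈ Finset.univ, B i = 0 := fun i _ =>
          Nat.le_zero.mp (h ▸ hB (Fin.zero_le i))
        have h0 : Finset.univ.gcd B = 0 := Finset.gcd_eq_zero_iff.mpr hall
        rw [hBg] at h0
        exact one_ne_zero h0
      · exact h
    have h1 : Fin.last n ∉ winners B {1} := by
      intro hw
      have h2 := hw 0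
      rw [hs, hs, hBk] at h2
      omega
    have h2 : Fin.last n ∈ winners B' {1} := by
      intro d
      rw [hs, hs, hB'z, hB'z]
    intro hEq
    rw [hEq] at h1
    exact h1 h2
  rcases hAgcd with hg | hz
  · rcases hA'gcd with hg' | hz'
    · -- main case: both gcd 1
      obtain ⟨S, hS⟩ : ∃ S, S = ∑ i, A i := ⟨_, rfl⟩
      obtain ⟨S', hS'⟩ : ∃ S', S' = ∑ i, A' i := ⟨_, rfl⟩
      have hSpos : 0 < S := by
        rcases Nat.eq_zero_or_pos S with h | h
        · exfalso
          have hall : ∀ i ∈ Finset.univ, A i = 0 :=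
            Finset.sum_eq_zero_iff.mp (by rw [← hS, h])
          have h0 : Finset.univ.gcd A = 0 := Finset.gcd_eq_zero_iff.mpr hall
          rw [hg] at h0
          exact one_ne_zero h0
        · exact h
      have hex : ∃ j, S * A' j ≠ S' * A j := by
        by_contra hc
        push_neg at hc
        have e1 : Finset.univ.gcd (fun i => S * A' i) = S := by
          rw [Finset.gcd_mul_left, hg']; simp
        have e2 : Finset.univ.gcd (fun i => S' * A i) = S' := by
          rw [Finset.gcd_mul_left, hg]; simp
        have e3 : S = S' := by
          rw [← e1, ← e2]
          exact Finset.gcd_congr rfl (fun i _ => hc i)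
        apply hne
        funext i
        have := hc i
        rw [← e3] at this
        exact (Nat.eq_of_mul_eq_mul_left hSpos this).symm
      obtain ⟨j, hj⟩ := hex
      obtain ⟨a, ha⟩ : ∃ a : ℤ, a = ((n : ℤ) + 1) * A j - S := ⟨_, rfl⟩
      have hTT' : (a.toNat : ℤ) - (-a).toNat = a := by omega
      obtain ⟨V, hV⟩ : ∃ V : Multiset (Equiv.Perm (Fin (n+1))),
          V = (S • block (0 : Fin (n+1)) j + a.toNat • block 0 (Fin.last n))
            + ∑ d ∈ Finset.univ.erase (0 : Fin (n+1)), (-a).toNat • block d (Fin.last n) :=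
        ⟨_, rfl⟩
      have hscore : ∀ (α : Fin (n+1) → ℕ), α (Fin.last n) = 0 → ∀ e : Fin (n+1),
          score α V e
            = S * (if e = 0 then n * α j else (∑ i, α i) - α j)
              + a.toNat * (if e = 0 then 0 else ∑ i, α i)
              + (if e = 0 then n * ((-a).toNat * (∑ i, α i))
                  else (n - 1) * ((-a).toNat * (∑ i, α i))) := by
        intro α hα e
        rw [hV, score_add, score_add, score_nsmul, score_nsmul, score_sum]
        simp only [score_nsmul, score_block, hα, mul_zero, Nat.sub_zero]
        congr 1
        rw [Finset.sum_congr rfl (fun d _ => by rw [mul_ite, mul_zero]),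
          sum_ite_erase (by omega)]
      have key : ∀ (α : Fin (n+1) → ℕ), α (Fin.last n) = 0 → α j ≤ ∑ i, α i →
          ∀ e : Fin (n+1), e ≠ 0 →
          (score α V 0 : ℤ) - score α V e
            = ((n : ℤ) + 1) * ((S : ℤ) * α j) - (S : ℤ) * ((∑ i, α i : ℕ) : ℤ)
              - a * ((∑ i, α i : ℕ) : ℤ) := by
        intro α hα hle e he
        rw [hscore α hα 0, hscore α hα e, if_pos rfl, if_pos rfl, if_pos rfl,
          if_neg he, if_neg he, if_neg he]
        push_cast [Nat.cast_sub hle, Nat.cast_sub (show 1 ≤ n by omega)]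
        linear_combination (-((∑ i, (α i : ℤ)))) * hTT'
      have hAjS : A j ≤ ∑ i, A i :=
        Finset.single_le_sum (fun i _ => Nat.zero_le _) (Finset.mem_univ j)
      have hA'jS : A' j ≤ ∑ i, A' i :=
        Finset.single_le_sum (fun i _ => Nat.zero_le _) (Finset.mem_univ j)
      have hAeq : ∀ e, score A V e = score A V 0 := by
        intro e
        by_cases he : e = 0
        · rw [he]
        · have h1 := key A hAk hAjS e he
          rw [← hS] at h1
          have h2 : ((n : ℤ) + 1) * ((S : ℤ) * A j) - (S : ℤ) * (S : ℤ) - a * (S : ℤ) = 0 := by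
            rw [ha]; ring
          rw [h2] at h1
          omega
      have hwA : ∀ c : Fin (n+1), c ∈ winners A V := fun c d => by rw [hAeq d, hAeq c]
      have h1 := key A' hA'k hA'jS (Fin.last n) hk0
      rw [← hS'] at h1
      have h2 : ((n : ℤ) + 1) * ((S : ℤ) * A' j) - (S : ℤ) * (S' : ℤ) - a * (S' : ℤ)
          = ((n : ℤ) + 1) * ((S : ℤ) * A' j - (S' : ℤ) * A j) := by
        rw [ha]; ring
      rw [h2] at h1
      refine ⟨V, fun hEq => ?_⟩
      rcases lt_or_gt_of_ne hj with hlt | hgt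
      · -- S * A' j < S' * A j : score A' V 0 < score A' V last, yet 0 wins under A
        have h0w : (0 : Fin (n+1)) ∈ winners A' V := hEq ▸ hwA 0
        have h3 : score A' V (Fin.last n) ≤ score A' V 0 := h0w (Fin.last n)
        have hneg : ((n : ℤ) + 1) * ((S : ℤ) * A' j - (S' : ℤ) * A j) < 0 := by
          apply mul_neg_of_pos_of_neg
          · positivity
          · have : (S : ℤ) * A' j < (S' : ℤ) * A j := by exact_mod_cast hlt
            linarith
        rw [← h1] at hneg
        omega
      · -- S * A' j > S' * A j : last loses under A', yet wins under A
        have hlw : Fin.last n ∈ winners A' V := hEq ▸ hwA (Fin.last n)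
        have h3 : score A' V 0 ≤ score A' V (Fin.last n) := hlw 0
        have hpos : 0 < ((n : ℤ) + 1) * ((S : ℤ) * A' j - (S' : ℤ) * A j) := by
          apply mul_pos
          · positivity
          · have : (S' : ℤ) * A j < (S : ℤ) * A' j := by exact_mod_cast hgt
            linarith
        rw [← h1] at hpos
        omega
    · exact ⟨{1}, degen A A' hA hAk hg hz'⟩
  · rcases hA'gcd with hg' | hz'
    · exact ⟨{1}, Ne.symm (degen A' A hA' hA'k hg' hz)⟩
    · exact absurd (funext fun i => by rw [hz i, hz' i]) hne
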